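/- For every r ≥ 1, the set of pairs (s_1, s_2) of coprime nonzero integers with s_2 > 0 such that Γ_{s_1,s_2} ∩ Π_r = ∅ is finite. Equivalently, for each r, all but finitely many connected one-dimensional closed subgroups of T^2 of the form Γ_{s_1,s_2} intersect Π_r. -/

import Mathlib

noncomputable section

/-- The two-dimensional torus `T² = (ℝ/ℤ)²`. -/
abbrev T2 := AddCircle (1 : ℝ) × AddCircle (1 : ℝ)

/-- The subgroup `Γ_{s₁,s₂} = {(θ₁, θ₂) ∈ T² : s₁θ₁ + s₂θ₂ = 0}`. -/
def GammaSlope (s1 s2 : ℤ) : Set T2 := {θ : T2 | s1 • θ.1 + s2 • θ.2 = 0}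

/-- `Π_r ⊂ T²`, the image under `q` of the open square `(0, 1/r)²`. -/
def PiSquare (r : ℕ) : Set T2 :=
  {θ : T2 | ∃ x y : ℝ, 0 < x ∧ x < 1 / (r : ℝ) ∧ 0 < y ∧ y < 1 / (r : ℝ) ∧
    θ = ((x : AddCircle (1 : ℝ)), (y : AddCircle (1 : ℝ)))}

lemma exists_int_in_open (a b : ℝ) (h : a + 1 < b) : ∃ k : ℤ, a < k ∧ (k : ℝ) < b := by
  refine ⟨⌊a⌋ + 1, ?_, ?_⟩ <;> push_cast
  · exact Int.lt_floor_add_one a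
  · linarith [Int.floor_le a]

/-- If `|s| > r` then for any shift `c` we can solve `s*x + c ∈ ℤ` with `x ∈ (0, 1/r)`. -/
lemma key (r : ℕ) (hr : 1 ≤ r) (s : ℤ) (hs : (r : ℝ) < |(s : ℝ)|) (c : ℝ) :
    ∃ x : ℝ, 0 < x ∧ x < 1 / (r : ℝ) ∧ ∃ k : ℤ, (s : ℝ) * x + c = k := by
  have hr0 : (0 : ℝ) < r := by exact_mod_cast hr
  have hs0 : (s : ℝ) ≠ 0 := by
    intro h0; rw [h0, abs_zero] at hs; linarith
  rcases lt_or_ge (0 : ℝ) (s : ℝ) with hspos | hsnonpos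
  · have habs : |(s : ℝ)| = s := abs_of_pos hspos
    rw [habs] at hs
    have hdiv : (1 : ℝ) < (s : ℝ) / (r : ℝ) := (one_lt_div hr0).2 hs
    obtain ⟨k, hk1, hk2⟩ := exists_int_in_open c (c + (s : ℝ) / (r : ℝ)) (by linarith)
    refine ⟨((k : ℝ) - c) / s, div_pos (by linarith) hspos, ?_, k, by field_simp; ring⟩
    rw [div_lt_div_iff₀ hspos hr0]
    have hmul : ((k : ℝ) - c) * r < ((s : ℝ) / r) * r :=
      mul_lt_mul_of_pos_right (by linarith) hr0
    rw [div_mul_cancel₀ _ (ne_of_gt hr0)] at hmul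
    linarith
  · have hsneg : (s : ℝ) < 0 := lt_of_le_of_ne hsnonpos hs0
    have habs : |(s : ℝ)| = -s := abs_of_neg hsneg
    rw [habs] at hs
    have hdiv : (s : ℝ) / (r : ℝ) < -1 := by
      have h1 : (1 : ℝ) < (-(s : ℝ)) / (r : ℝ) := (one_lt_div hr0).2 hs
      rw [neg_div] at h1
      linarith
    obtain ⟨k, hk1, hk2⟩ :=
      exists_int_in_open (c + (s : ℝ) / (r : ℝ)) c (by linarith)
    refine ⟨((k : ℝ) - c) / s, div_pos_of_neg_of_neg (by linarith) hsneg, ?_, k, by field_simp; ring⟩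
    rw [div_lt_iff_of_neg hsneg]
    have : (1 : ℝ) / r * s = (s : ℝ) / r := by ring
    linarith

lemma coe_int_zero (k : ℤ) : ((k : ℝ) : AddCircle (1 : ℝ)) = 0 := by
  rw [AddCircle.coe_eq_zero_iff]
  exact ⟨k, by simp⟩

lemma mem_gamma_of_int (s1 s2 : ℤ) (x y : ℝ) (k : ℤ)
    (h : (s1 : ℝ) * x + (s2 : ℝ) * y = k) :
    ((x : AddCircle (1 : ℝ)), (y : AddCircle (1 : ℝ))) ∈ GammaSlope s1 s2 := by
  show s1 • ((x : AddCircle (1 : ℝ))) + s2 • ((y : AddCircle (1 : ℝ))) = 0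
  have h1 : s1 • ((x : AddCircle (1 : ℝ))) = (((s1 : ℝ) * x : ℝ) : AddCircle (1 : ℝ)) := by
    rw [← AddCircle.coe_zsmul]; norm_num
  have h2 : s2 • ((y : AddCircle (1 : ℝ))) = (((s2 : ℝ) * y : ℝ) : AddCircle (1 : ℝ)) := by
    rw [← AddCircle.coe_zsmul]; norm_num
  rw [h1, h2, ← AddCircle.coe_add, h, coe_int_zero]

/-- For every `r ≥ 1`, only finitely many of the subgroups `Γ_{s₁,s₂}` (with `s₁, s₂`
coprime, `s₁ ≠ 0`, `s₂ > 0`) fail to intersect `Π_r`. -/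
theorem finite_gammaSlope_not_meeting_piSquare (r : ℕ) (hr : 1 ≤ r) :
    {p : ℤ × ℤ | IsCoprime p.1 p.2 ∧ p.1 ≠ 0 ∧ 0 < p.2 ∧
      GammaSlope p.1 p.2 ∩ PiSquare r = ∅}.Finite := by
  have hr0 : (0 : ℝ) < r := by exact_mod_cast hr
  have hmid1 : 0 < 1 / (2 * (r : ℝ)) := by positivity
  have hmid2 : 1 / (2 * (r : ℝ)) < 1 / (r : ℝ) := by
    apply div_lt_div_of_pos_left one_pos hr0; linarith
  refine Set.Finite.subset
    ((Set.finite_Icc (-(r : ℤ)) (r : ℤ)).prod (Set.finite_Icc (1 : ℤ) (r : ℤ))) ?_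
  rintro ⟨s1, s2⟩ ⟨-, h1, h2, hempty⟩
  simp only [Set.mem_prod, Set.mem_Icc]
  have hne : ∀ θ : T2, θ ∈ GammaSlope s1 s2 → θ ∈ PiSquare r → False := by
    intro θ hg hp
    have hmem : θ ∈ GammaSlope s1 s2 ∩ PiSquare r := ⟨hg, hp⟩
    rw [hempty] at hmem
    exact hmem
  constructor
  · -- |s1| ≤ r
    have hb : ¬ ((r : ℝ) < |(s1 : ℝ)|) := by
      intro habs
      obtain ⟨x, hx0, hx1, k, hk⟩ := key r hr s1 habs ((s2 : ℝ) * (1 / (2 * (r : ℝ))))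
      exact hne _ (mem_gamma_of_int s1 s2 x (1 / (2 * (r : ℝ))) k hk)
        ⟨x, 1 / (2 * (r : ℝ)), hx0, hx1, hmid1, hmid2, rfl⟩
    push_neg at hb
    have hb' : |(s1 : ℝ)| ≤ (r : ℝ) := hb
    rw [abs_le] at hb'
    constructor <;> [exact_mod_cast hb'.1; exact_mod_cast hb'.2]
  · -- 1 ≤ s2 ≤ r
    refine ⟨h2, ?_⟩
    have hb : ¬ ((r : ℝ) < |(s2 : ℝ)|) := by
      intro habs
      obtain ⟨y, hy0, hy1, k, hk⟩ := key r hr s2 habs ((s1 : ℝ) * (1 / (2 * (r : ℝ))))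
      refine hne _ (mem_gamma_of_int s1 s2 (1 / (2 * (r : ℝ))) y k ?_)
        ⟨1 / (2 * (r : ℝ)), y, hmid1, hmid2, hy0, hy1, rfl⟩
      linarith
    push_neg at hb
    have hb' : (s2 : ℝ) ≤ (r : ℝ) := (le_abs_self _).trans hb
    exact_mod_cast hb'
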